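/- Per-type CN derivative formula: Let δ be a check-node type whose local code (the row space of an h_δ × s_δ generator matrix G_δ over GF(2) of rank h_δ) has minimum Hamming weight at least 2, with coordinates typed by E. Then for all e,m ∈ E with s_{δ,e} > 0, the partial derivative of I_{EC,e}^{(δ)} with respect to its m-th argument, evaluated at the all-ones point I = (1,…,1), equals ξ_2^{(δ)}(e,m)/s_{δ,e}. In particular, it is 0 whenever the local code of δ has minimum distance greater than 2. -/

import Mathlib

open scoped Classical

noncomputable section

namespace MET

/-- Hamming weight of a binary vector. -/
def hWeight {m : ℕ} (x : Fin m → ZMod 2) : ℕ :=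
  (Finset.univ.filter fun i => x i ≠ 0).card

/-- The row space of `G` (the local code) has minimum Hamming weight at least 2. -/
def HasMinDistGE2 {k q : ℕ} (G : Matrix (Fin k) (Fin q) (ZMod 2)) : Prop :=
  ∀ x : Fin k → ZMod 2, Matrix.vecMul x G ≠ 0 → 2 ≤ hWeight (Matrix.vecMul x G)

/-- The row space of `G` has minimum Hamming weight exactly 2. -/
def HasMinDistEq2 {k q : ℕ} (G : Matrix (Fin k) (Fin q) (ZMod 2)) : Prop :=
  HasMinDistGE2 G ∧ ∃ x : Fin k → ZMod 2, hWeight (Matrix.vecMul x G) = 2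

/-- The weight-2 vector supported on `{i,j}`. -/
def wt2vec {q : ℕ} (i j : Fin q) : Fin q → ZMod 2 :=
  fun r => if r = i ∨ r = j then 1 else 0

/-- Number of columns of edge type `l`. -/
def colCount {q n : ℕ} (τ : Fin q → Fin n) (l : Fin n) : ℕ :=
  (Finset.univ.filter fun j => τ j = l).card

/-- Rank of the matrix formed by the columns of `G` indexed by `A` together with the columns
of the `k × k` identity matrix indexed by `T`. -/
def colRank {k q : ℕ} (G : Matrix (Fin k) (Fin q) (ZMod 2))
    (A : Finset (Fin q)) (T : Finset (Fin k)) : ℕ :=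
  Matrix.rank (Matrix.of fun (i : Fin k) (j : {x // x ∈ A} ⊕ {x // x ∈ T}) =>
    Sum.elim (fun a => G i a.1) (fun t => if i = t.1 then (1 : ZMod 2) else 0) j)

/-- Multi-type split information function `ẽ_{g;u}` of a VN generator matrix. -/
def eTilde {n k q : ℕ} (G : Matrix (Fin k) (Fin q) (ZMod 2)) (τ : Fin q → Fin n)
    (g : Fin n → ℕ) (u : ℕ) : ℕ :=
  ∑ A ∈ Finset.univ.filter (fun A : Finset (Fin q) =>
      ∀ l, (A.filter fun j => τ j = l).card = g l),
    ∑ T ∈ Finset.univ.filter (fun T : Finset (Fin k) => T.card = u),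
      colRank G A T

/-- Multi-type information function `ẽ_g` of a CN generator matrix. -/
def eTildeC {n h s : ℕ} (G : Matrix (Fin h) (Fin s) (ZMod 2)) (τ : Fin s → Fin n)
    (g : Fin n → ℕ) : ℕ :=
  ∑ A ∈ Finset.univ.filter (fun A : Finset (Fin s) =>
      ∀ l, (A.filter fun j => τ j = l).card = g l),
    colRank G A ∅

/-- `χ_{2,u}(l,m)`: ordered pairs of distinct columns of types `l,m` supporting a weight-2
codeword generated by a weight-`u` input word. -/
def chi2 {n k q : ℕ} (G : Matrix (Fin k) (Fin q) (ZMod 2)) (τ : Fin q → Fin n)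
    (u : ℕ) (l m : Fin n) : ℕ :=
  (Finset.univ.filter fun p : Fin q × Fin q =>
    p.1 ≠ p.2 ∧ τ p.1 = l ∧ τ p.2 = m ∧
      ∃ x : Fin k → ZMod 2, hWeight x = u ∧ Matrix.vecMul x G = wt2vec p.1 p.2).card

/-- `ξ_2(l,m)`: ordered pairs of distinct coordinates of types `l,m` supporting a weight-2
codeword of the row space. -/
def xi2 {n h s : ℕ} (G : Matrix (Fin h) (Fin s) (ZMod 2)) (τ : Fin s → Fin n)
    (l m : Fin n) : ℕ :=
  (Finset.univ.filter fun p : Fin s × Fin s =>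
    p.1 ≠ p.2 ∧ τ p.1 = l ∧ τ p.2 = m ∧
      ∃ x : Fin h → ZMod 2, Matrix.vecMul x G = wt2vec p.1 p.2).card

/-- Range of the tuple `t`: `0 ≤ t l ≤ q l` for `l ≠ e` and `0 ≤ t e ≤ q e - 1`. -/
def tRange {n : ℕ} (q : Fin n → ℕ) (e : Fin n) : Finset (Fin n → ℕ) :=
  Fintype.piFinset fun l => Finset.range (if l = e then q l else q l + 1)

/-- The coefficient `a^{(γ,e)}_{t,z}` of the VN EXIT function. -/
def aVN {n k q : ℕ} (G : Matrix (Fin k) (Fin q) (ZMod 2)) (τ : Fin q → Fin n)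
    (e : Fin n) (t : Fin n → ℕ) (z : ℕ) : ℝ :=
  ((colCount τ e - t e : ℕ) : ℝ) *
      (eTilde G τ (fun l => colCount τ l - t l) (k - z) : ℝ)
    - ((t e + 1 : ℕ) : ℝ) *
      (eTilde G τ (fun l => colCount τ l - t l - (if l = e then 1 else 0)) (k - z) : ℝ)

/-- The coefficient `a^{(δ,e)}_{t}` of the CN EXIT function. -/
def aCN {n h s : ℕ} (G : Matrix (Fin h) (Fin s) (ZMod 2)) (τ : Fin s → Fin n)
    (e : Fin n) (t : Fin n → ℕ) : ℝ :=
  ((colCount τ e - t e : ℕ) : ℝ) *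
      (eTildeC G τ (fun l => colCount τ l - t l) : ℝ)
    - ((t e + 1 : ℕ) : ℝ) *
      (eTildeC G τ (fun l => colCount τ l - t l - (if l = e then 1 else 0)) : ℝ)

/-- Per-type VN EXIT function `I_{EV,e}^{(γ)}(I, ε)`. -/
def IEV {n k q : ℕ} (G : Matrix (Fin k) (Fin q) (ZMod 2)) (τ : Fin q → Fin n)
    (e : Fin n) (I : Fin n → ℝ) (ε : ℝ) : ℝ :=
  1 - (1 / (colCount τ e : ℝ)) *
    ∑ z ∈ Finset.range (k + 1), ε ^ z * (1 - ε) ^ (k - z) *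
      ∑ t ∈ tRange (colCount τ) e,
        (∏ l, (1 - I l) ^ t l * (I l) ^ (colCount τ l - t l - (if l = e then 1 else 0))) *
          aVN G τ e t z

/-- Per-type CN EXIT function `I_{EC,e}^{(δ)}(I)`. -/
def IEC {n h s : ℕ} (G : Matrix (Fin h) (Fin s) (ZMod 2)) (τ : Fin s → Fin n)
    (e : Fin n) (I : Fin n → ℝ) : ℝ :=
  1 - (1 / (colCount τ e : ℝ)) *
    ∑ t ∈ tRange (colCount τ) e,
      (∏ l, (1 - I l) ^ t l * (I l) ^ (colCount τ l - t l - (if l = e then 1 else 0))) *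
        aCN G τ e t

/-- A variable node type: a `k × q` generator matrix over `GF(2)` with a typing of its
columns by edge types (no punctured bits). -/
structure VNType (n : ℕ) where
  k : ℕ
  q : ℕ
  G : Matrix (Fin k) (Fin q) (ZMod 2)
  τ : Fin q → Fin n

/-- A check node type: an `h × s` generator matrix over `GF(2)` with a typing of its
columns by edge types. -/
structure CNType (n : ℕ) where
  h : ℕ
  s : ℕ
  G : Matrix (Fin h) (Fin s) (ZMod 2)
  τ : Fin s → Fin n

/-- The variable-node side of a MET D-GLDPC ensemble. -/
structure VNSide (n : ℕ) where
  nV : ℕ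
  vn : Fin nV → VNType n
  lam : Fin nV → Fin n → ℝ
  lam_nonneg : ∀ γ l, 0 ≤ lam γ l
  lam_sum : ∀ l, ∑ γ, lam γ l = 1
  lam_pos_iff : ∀ γ l, 0 < lam γ l ↔ 0 < colCount (vn γ).τ l

/-- The check-node side of a MET D-GLDPC ensemble. -/
structure CNSide (n : ℕ) where
  nC : ℕ
  cn : Fin nC → CNType n
  rho : Fin nC → Fin n → ℝ
  rho_nonneg : ∀ δ l, 0 ≤ rho δ l
  rho_sum : ∀ l, ∑ δ, rho δ l = 1
  rho_pos_iff : ∀ δ l, 0 < rho δ l ↔ 0 < colCount (cn δ).τ l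

/-- A MET D-GLDPC ensemble. -/
structure Ensemble (n : ℕ) extends VNSide n, CNSide n

/-- All VN local codes have full-rank generator matrix and minimum distance at least 2. -/
def VNSide.Good {n : ℕ} (V : VNSide n) : Prop :=
  ∀ γ, ((V.vn γ).G).rank = (V.vn γ).k ∧ HasMinDistGE2 (V.vn γ).G

/-- All CN local codes have full-rank generator matrix and minimum distance at least 2. -/
def CNSide.Good {n : ℕ} (C : CNSide n) : Prop :=
  ∀ δ, ((C.cn δ).G).rank = (C.cn δ).h ∧ HasMinDistGE2 (C.cn δ).G

/-- The matrix `P(ε)` with entries `P^{l,m}(ε)`. -/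
def Pmat {n : ℕ} (V : VNSide n) (ε : ℝ) : Matrix (Fin n) (Fin n) ℝ :=
  Matrix.of fun l m =>
    ∑ γ, if HasMinDistEq2 (V.vn γ).G then
      (V.lam γ l / (colCount (V.vn γ).τ l : ℝ)) *
        ∑ u ∈ Finset.Icc 1 (V.vn γ).k, (chi2 (V.vn γ).G (V.vn γ).τ u l m : ℝ) * ε ^ u
    else 0

/-- The matrix `C` with entries `C^{l,m}`. -/
def Cmat {n : ℕ} (C : CNSide n) : Matrix (Fin n) (Fin n) ℝ :=
  Matrix.of fun l m =>
    ∑ δ, if HasMinDistEq2 (C.cn δ).G then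
      (C.rho δ l / (colCount (C.cn δ).τ l : ℝ)) * (xi2 (C.cn δ).G (C.cn δ).τ l m : ℝ)
    else 0

/-- Aggregate VN EXIT function `I_{EV,e}(I,ε)`. -/
def IEVagg {n : ℕ} (V : VNSide n) (e : Fin n) (I : Fin n → ℝ) (ε : ℝ) : ℝ :=
  ∑ γ ∈ Finset.univ.filter (fun γ => 0 < V.lam γ e),
    V.lam γ e * IEV (V.vn γ).G (V.vn γ).τ e I ε

/-- Aggregate CN EXIT function `I_{EC,e}(I)`. -/
def IECagg {n : ℕ} (C : CNSide n) (e : Fin n) (I : Fin n → ℝ) : ℝ :=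
  ∑ δ ∈ Finset.univ.filter (fun δ => 0 < C.rho δ e),
    C.rho δ e * IEC (C.cn δ).G (C.cn δ).τ e I

/-- The EXIT recursion `f(·,ε)`. -/
def exitMap {n : ℕ} (E : Ensemble n) (ε : ℝ) (I : Fin n → ℝ) : Fin n → ℝ :=
  fun e => IEVagg E.toVNSide e (fun m => IECagg E.toCNSide m I) ε

/-- Local stability of the fixed point `1` of the EXIT recursion. -/
def LocallyStable {n : ℕ} (E : Ensemble n) (ε : ℝ) : Prop :=
  ∃ U : Set (Fin n → ℝ), IsOpen U ∧ (fun _ => (1 : ℝ)) ∈ U ∧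
    ∀ I ∈ U ∩ Set.Icc (fun _ => (0 : ℝ)) (fun _ => (1 : ℝ)),
      Filter.Tendsto (fun m => (exitMap E ε)^[m] I) Filter.atTop (nhds fun _ => (1 : ℝ))

/-- Spectral radius of a real square matrix: the maximum modulus of its complex
eigenvalues. -/
def specRad {m : ℕ} (A : Matrix (Fin m) (Fin m) ℝ) : ℝ :=
  (spectralRadius ℂ (A.map fun x : ℝ => (x : ℂ))).toReal


section Aux
open Finset Matrix

instance instEmptyFinsetMem {k : ℕ} : IsEmpty {x // x ∈ (∅ : Finset (Fin k))} :=
  ⟨fun t => absurd t.2 (Finset.notMem_empty _)⟩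

lemma rank_submatrix_cols {R : Type*} [Field R] {α β γ : Type*} [Fintype α] [Fintype β]
    (M : Matrix γ α R) (e : β ≃ α) : (M.submatrix id e).rank = M.rank := by
  rw [Matrix.rank, Matrix.rank, Matrix.mulVecLin_submatrix]
  rw [show LinearMap.funLeft R R (id : γ → γ) = LinearMap.id from
    LinearMap.ext fun x => rfl]
  rw [LinearMap.id_comp, LinearMap.range_comp_of_range_eq_top]
  exact LinearMap.range_eq_top.2 (LinearEquiv.funCongrLeft R R e.symm).surjective

variable {n h s : ℕ} (G : Matrix (Fin h) (Fin s) (ZMod 2)) (τ : Fin s → Fin n)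

/-- The column submatrix of `G` given by `A`. -/
def subCols (A : Finset (Fin s)) : Matrix (Fin h) {x // x ∈ A} (ZMod 2) :=
  Matrix.of fun i a => G i a.1

lemma colRank_eq_rank_subCols (A : Finset (Fin s)) :
    colRank G A ∅ = (subCols G A).rank := by
  have hM : (Matrix.of fun (i : Fin h) (j : {x // x ∈ A} ⊕ {x // x ∈ (∅ : Finset (Fin h))}) =>
      Sum.elim (fun a => G i a.1) (fun t => if i = t.1 then (1 : ZMod 2) else 0) j)
      = (subCols G A).submatrix id (Equiv.sumEmpty {x // x ∈ A} {x // x ∈ (∅ : Finset (Fin h))}) := by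
    ext i j
    cases j with
    | inl a => rfl
    | inr t => exact absurd t.2 (Finset.notMem_empty _)
  rw [colRank, hM, rank_submatrix_cols]

lemma colRank_add_finrank (A : Finset (Fin s)) :
    colRank G A ∅ +
      Module.finrank (ZMod 2) (LinearMap.ker (Matrix.vecMulLinear (subCols G A))) = h := by
  rw [colRank_eq_rank_subCols, ← Matrix.rank_transpose,
    show (subCols G A)ᵀ.rank
      = Module.finrank (ZMod 2) (LinearMap.range (Matrix.vecMulLinear (subCols G A))) by
        rw [Matrix.rank, ← Matrix.vecMulLinear_transpose, Matrix.transpose_transpose]]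
  rw [LinearMap.finrank_range_add_finrank_ker, Module.finrank_fin_fun]

lemma mem_ker_subCols {A : Finset (Fin s)} {x : Fin h → ZMod 2} :
    x ∈ LinearMap.ker (Matrix.vecMulLinear (subCols G A)) ↔
      ∀ j ∈ A, Matrix.vecMul x G j = 0 := by
  simp only [LinearMap.mem_ker, Matrix.vecMulLinear_apply]
  constructor
  · intro hx j hj
    have := congrFun hx ⟨j, hj⟩
    simpa [Matrix.vecMul, dotProduct, subCols] using this
  · intro hx
    funext a
    simpa [Matrix.vecMul, dotProduct, subCols] using hx a.1 a.2

lemma colRank_of_trivial_ker (A : Finset (Fin s))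
    (hA : ∀ x : Fin h → ZMod 2, (∀ j ∈ A, Matrix.vecMul x G j = 0) → x = 0) :
    colRank G A ∅ = h := by
  have hker : LinearMap.ker (Matrix.vecMulLinear (subCols G A)) = ⊥ := by
    rw [Submodule.eq_bot_iff]
    intro x hx
    exact hA x ((mem_ker_subCols G).1 hx)
  have := colRank_add_finrank G A
  rw [hker, finrank_bot] at this
  simpa using this

lemma vecMul_inj (hrk : G.rank = h) {x : Fin h → ZMod 2}
    (hx : Matrix.vecMul x G = 0) : x = 0 := by
  have h1 : Gᵀ.rank = h := by rw [Matrix.rank_transpose]; exact hrk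
  have h2 : Module.finrank (ZMod 2) (LinearMap.range Gᵀ.mulVecLin)
      + Module.finrank (ZMod 2) (LinearMap.ker Gᵀ.mulVecLin) = h := by
    rw [LinearMap.finrank_range_add_finrank_ker, Module.finrank_fin_fun]
  have h3 : Module.finrank (ZMod 2) (LinearMap.ker Gᵀ.mulVecLin) = 0 := by
    have : Gᵀ.rank = Module.finrank (ZMod 2) (LinearMap.range Gᵀ.mulVecLin) := rfl
    omega
  have h4 : LinearMap.ker Gᵀ.mulVecLin = ⊥ := Submodule.finrank_eq_zero.1 h3
  have h5 : x ∈ LinearMap.ker Gᵀ.mulVecLin := by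
    rw [LinearMap.mem_ker, Matrix.mulVecLin_apply, Matrix.mulVec_transpose]
    exact hx
  rw [h4, Submodule.mem_bot] at h5
  exact h5

end Aux

section Aux2
open Finset Matrix
variable {n h s : ℕ} (G : Matrix (Fin h) (Fin s) (ZMod 2)) (τ : Fin s → Fin n)

lemma zmod2_ne_zero {a : ZMod 2} (ha : a ≠ 0) : a = 1 := by
  revert ha; revert a; decide

lemma wt2vec_ne_zero {i j : Fin s} : wt2vec i j ≠ 0 := by
  intro hc
  have := congrFun hc i
  simp [wt2vec] at this

lemma eq_wt2vec (hmd : HasMinDistGE2 G) {i j : Fin s} (hij : i ≠ j)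
    {x : Fin h → ZMod 2} (hx : Matrix.vecMul x G ≠ 0)
    (hsupp : ∀ r, r ≠ i → r ≠ j → Matrix.vecMul x G r = 0) :
    Matrix.vecMul x G = wt2vec i j := by
  set v := Matrix.vecMul x G with hv
  have h2 : 2 ≤ hWeight v := hmd x hx
  have hsub : (Finset.univ.filter fun r => v r ≠ 0) ⊆ {i, j} := by
    intro r hr
    simp only [Finset.mem_filter, Finset.mem_univ, true_and] at hr
    simp only [Finset.mem_insert, Finset.mem_singleton]
    by_contra hc
    push_neg at hc
    exact hr (hsupp r hc.1 hc.2)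
  have hcard2 : ({i, j} : Finset (Fin s)).card = 2 := Finset.card_pair hij
  have hle : hWeight v ≤ 2 := by
    rw [← hcard2]; exact Finset.card_le_card hsub
  have heq : (Finset.univ.filter fun r => v r ≠ 0) = {i, j} :=
    Finset.eq_of_subset_of_card_le hsub (by rw [hcard2]; exact h2)
  have hi : v i ≠ 0 := by
    have : i ∈ Finset.univ.filter fun r => v r ≠ 0 := by
      rw [heq]; simp
    simpa using this
  have hj : v j ≠ 0 := by
    have : j ∈ Finset.univ.filter fun r => v r ≠ 0 := by
      rw [heq]; simp
    simpa using this
  funext r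
  by_cases hri : r = i
  · subst hri; simp [wt2vec, zmod2_ne_zero hi]
  by_cases hrj : r = j
  · subst hrj; simp [wt2vec, zmod2_ne_zero hj]
  · simp [wt2vec, hri, hrj, hsupp r hri hrj]

lemma colRank_compl_singleton (hrk : G.rank = h) (hmd : HasMinDistGE2 G) (j0 : Fin s) :
    colRank G ({j0}ᶜ : Finset (Fin s)) ∅ = h := by
  apply colRank_of_trivial_ker
  intro x hx
  by_contra hx0
  have hvm : Matrix.vecMul x G ≠ 0 := fun hc => hx0 (vecMul_inj G hrk hc)
  have h2 := hmd x hvm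
  have hsub : (Finset.univ.filter fun r => Matrix.vecMul x G r ≠ 0) ⊆ {j0} := by
    intro r hr
    simp only [Finset.mem_filter, Finset.mem_univ, true_and] at hr
    simp only [Finset.mem_singleton]
    by_contra hc
    exact hr (hx r (by simp [hc]))
  have := Finset.card_le_card hsub
  simp only [Finset.card_singleton] at this
  rw [hWeight] at h2
  omega

lemma colRank_compl_pair (hrk : G.rank = h) (hmd : HasMinDistGE2 G) {i j : Fin s}
    (hij : i ≠ j) :
    colRank G ({i, j}ᶜ : Finset (Fin s)) ∅ +
      (if ∃ x : Fin h → ZMod 2, Matrix.vecMul x G = wt2vec i j then 1 else 0) = h := by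
  have hmem : ∀ r : Fin s, r ∈ ({i, j}ᶜ : Finset (Fin s)) ↔ r ≠ i ∧ r ≠ j := by
    intro r
    simp only [Finset.mem_compl, Finset.mem_insert, Finset.mem_singleton]
    tauto
  by_cases hP : ∃ x : Fin h → ZMod 2, Matrix.vecMul x G = wt2vec i j
  · obtain ⟨x0, hx0⟩ := hP
    have hx0ne : x0 ≠ 0 := by
      intro hc; subst hc
      rw [Matrix.zero_vecMul] at hx0
      exact wt2vec_ne_zero hx0.symm
    have hker : LinearMap.ker (Matrix.vecMulLinear (subCols G ({i, j}ᶜ : Finset (Fin s))))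
        = Submodule.span (ZMod 2) {x0} := by
      apply le_antisymm
      · intro y hy
        rw [mem_ker_subCols] at hy
        have hy' : ∀ r, r ≠ i → r ≠ j → Matrix.vecMul y G r = 0 := by
          intro r h1 h2; exact hy r ((hmem r).2 ⟨h1, h2⟩)
        by_cases hvy : Matrix.vecMul y G = 0
        · have : y = 0 := vecMul_inj G hrk hvy
          rw [this]; exact Submodule.zero_mem _
        · have hyw : Matrix.vecMul y G = wt2vec i j := eq_wt2vec G hmd hij hvy hy'
          have : y = x0 := by
            have hd : Matrix.vecMul (y - x0) G = 0 := by
              rw [Matrix.sub_vecMul, hyw, hx0, sub_self]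
            have := vecMul_inj G hrk hd
            rwa [sub_eq_zero] at this
          rw [this]
          exact Submodule.mem_span_singleton_self x0
      · rw [Submodule.span_le, Set.singleton_subset_iff, SetLike.mem_coe, mem_ker_subCols]
        intro r hr
        rw [hx0]
        have := (hmem r).1 hr
        simp [wt2vec, this.1, this.2]
    have h1 := colRank_add_finrank G ({i, j}ᶜ : Finset (Fin s))
    rw [hker, finrank_span_singleton hx0ne] at h1
    rw [if_pos (⟨x0, hx0⟩ : ∃ x : Fin h → ZMod 2, Matrix.vecMul x G = wt2vec i j)]
    exact h1
  · have hker : LinearMap.ker (Matrix.vecMulLinear (subCols G ({i, j}ᶜ : Finset (Fin s)))) = ⊥ := by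
      rw [Submodule.eq_bot_iff]
      intro y hy
      rw [mem_ker_subCols] at hy
      have hy' : ∀ r, r ≠ i → r ≠ j → Matrix.vecMul y G r = 0 := by
        intro r h1 h2; exact hy r ((hmem r).2 ⟨h1, h2⟩)
      by_contra hy0
      have hvy : Matrix.vecMul y G ≠ 0 := fun hc => hy0 (vecMul_inj G hrk hc)
      exact hP ⟨y, eq_wt2vec G hmd hij hvy hy'⟩
    have h1 := colRank_add_finrank G ({i, j}ᶜ : Finset (Fin s))
    rw [hker, finrank_bot] at h1
    rw [if_neg hP]
    exact h1

end Aux2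

section Aux3
open Finset Matrix
variable {n h s : ℕ} (G : Matrix (Fin h) (Fin s) (ZMod 2)) (τ : Fin s → Fin n)

lemma filter_card_add (A : Finset (Fin s)) (l : Fin n) :
    (A.filter fun j => τ j = l).card + (Aᶜ.filter fun j => τ j = l).card = colCount τ l := by
  rw [colCount, ← Finset.card_union_of_disjoint
    (Finset.disjoint_filter_filter disjoint_compl_right), ← Finset.filter_union,
    Finset.union_compl]

lemma eTildeC_compl (c : Fin n → ℕ) (hc : ∀ l, c l ≤ colCount τ l) :
    eTildeC G τ (fun l => colCount τ l - c l) =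
      ∑ B ∈ Finset.univ.filter (fun B : Finset (Fin s) =>
        ∀ l, (B.filter fun j => τ j = l).card = c l), colRank G Bᶜ ∅ := by
  rw [eTildeC]
  apply Finset.sum_nbij' (i := fun A => Aᶜ) (j := fun B => Bᶜ)
  · intro A hA
    simp only [Finset.mem_filter, Finset.mem_univ, true_and] at hA ⊢
    intro l
    have h1 := filter_card_add τ A l
    have h2 := hA l
    have h3 := hc l
    omega
  · intro B hB
    simp only [Finset.mem_filter, Finset.mem_univ, true_and] at hB ⊢
    intro l
    have h1 := filter_card_add τ Bᶜ l
    rw [compl_compl] at h1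
    have h2 := hB l
    omega
  · intro A _; exact compl_compl A
  · intro B _; exact compl_compl B
  · intro A _; rw [compl_compl]

lemma card_eq_sum_fiber (B : Finset (Fin s)) :
    B.card = ∑ l, (B.filter fun j => τ j = l).card :=
  Finset.card_eq_sum_card_fiberwise fun j _ => Finset.mem_univ (τ j)

lemma eTildeC_full (hrk : G.rank = h) : eTildeC G τ (colCount τ) = h := by
  have harg : colCount τ = fun l => colCount τ l - (fun _ : Fin n => 0) l := by
    funext l; simp
  rw [harg, eTildeC_compl G τ (fun _ => 0) (fun l => Nat.zero_le _)]
  have hset : Finset.univ.filter (fun B : Finset (Fin s) =>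
      ∀ l, (B.filter fun j => τ j = l).card = (fun _ : Fin n => 0) l) = {∅} := by
    ext B
    simp only [Finset.mem_filter, Finset.mem_univ, true_and, Finset.mem_singleton]
    constructor
    · intro hB
      have := card_eq_sum_fiber τ B
      simp [hB] at this
      exact this
    · intro hB; subst hB; simp
  rw [hset, Finset.sum_singleton, Finset.compl_empty]
  exact colRank_of_trivial_ker G Finset.univ (fun x hx => by
    apply vecMul_inj G hrk
    funext j
    exact hx j (Finset.mem_univ j))

lemma Bset_singleton (l0 : Fin n) :
    Finset.univ.filter (fun B : Finset (Fin s) =>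
        ∀ l, (B.filter fun j => τ j = l).card = if l = l0 then 1 else 0)
      = (Finset.univ.filter fun j => τ j = l0).image (fun j => {j}) := by
  ext B
  simp only [Finset.mem_filter, Finset.mem_univ, true_and, Finset.mem_image]
  constructor
  · intro hB
    have hcard : B.card = 1 := by
      rw [card_eq_sum_fiber τ B]
      simp only [hB]
      simp
    obtain ⟨j, hj⟩ := Finset.card_eq_one.1 hcard
    have htype : τ j = l0 := by
      have := hB (τ j)
      rw [hj, Finset.filter_singleton] at this
      simp only [if_pos rfl, Finset.card_singleton] at this
      by_contra hc
      rw [if_neg hc] at this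
      exact one_ne_zero this
    exact ⟨j, by simpa using htype, hj.symm⟩
  · rintro ⟨j, hj, rfl⟩
    intro l
    rw [Finset.filter_singleton]
    by_cases hl : l = l0
    · subst hl; rw [if_pos hj, if_pos rfl]; simp
    · rw [if_neg (fun hc : τ j = l => hl (hc ▸ hj ▸ rfl)), if_neg hl]; simp

lemma eTildeC_one (hrk : G.rank = h) (hmd : HasMinDistGE2 G) (l0 : Fin n)
    (hl0 : 1 ≤ colCount τ l0) :
    eTildeC G τ (fun l => colCount τ l - if l = l0 then 1 else 0) = colCount τ l0 * h := by
  rw [eTildeC_compl G τ (fun l => if l = l0 then 1 else 0)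
    (fun l => by by_cases hl : l = l0 <;> simp [hl] <;> omega)]
  rw [Bset_singleton τ l0]
  rw [Finset.sum_image (fun a _ b _ hab => Finset.singleton_inj.1 hab)]
  rw [Finset.sum_congr rfl (fun j _ => colRank_compl_singleton G hrk hmd j),
    Finset.sum_const, colCount, smul_eq_mul]



lemma pair_filter_card {a b : Fin s} (hab : a ≠ b) (P : Fin s → Prop) [DecidablePred P] :
    (({a, b} : Finset (Fin s)).filter P).card
      = (if P a then 1 else 0) + (if P b then 1 else 0) := by
  rw [Finset.filter_insert, Finset.filter_singleton]
  by_cases hPa : P a <;> by_cases hPb : P b <;>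
    simp [hPa, hPb, Finset.card_insert_of_notMem, hab]

lemma sum_c_eq_two (e m : Fin n) :
    ∑ l : Fin n, ((if l = e then 1 else 0) + (if l = m then 1 else 0)) = 2 := by
  rw [Finset.sum_add_distrib, Finset.sum_ite_eq' Finset.univ e (fun _ => 1),
    Finset.sum_ite_eq' Finset.univ m (fun _ => 1)]
  simp

lemma mem_Bset_iff (e m : Fin n) (B : Finset (Fin s)) :
    (B ∈ Finset.univ.filter (fun B : Finset (Fin s) =>
        ∀ l, (B.filter fun j => τ j = l).card
          = (if l = e then 1 else 0) + (if l = m then 1 else 0)))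
      ↔ ∃ a b : Fin s, a ≠ b ∧ τ a = e ∧ τ b = m ∧ B = {a, b} := by
  simp only [Finset.mem_filter, Finset.mem_univ, true_and]
  constructor
  · intro hB
    have hcard : B.card = 2 := by
      rw [card_eq_sum_fiber τ B, Finset.sum_congr rfl (fun l _ => hB l), sum_c_eq_two]
    obtain ⟨a, b, hab, rfl⟩ := Finset.card_eq_two.1 hcard
    have h1 := hB e
    have h2 := hB m
    rw [pair_filter_card hab] at h1 h2
    by_cases hme : m = e
    · subst hme
      simp only [if_pos rfl] at h1
      by_cases ha : τ a = m <;> by_cases hb : τ b = m <;> simp [ha, hb] at h1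
      exact ⟨a, b, hab, ha, hb, rfl⟩
    · simp only [if_pos rfl, if_neg hme, if_neg (fun hc : e = m => hme hc.symm)] at h1 h2
      by_cases ha : τ a = e
      · have hbe : ¬ τ b = e := by
          by_cases hb : τ b = e <;> simp [ha, hb] at h1 <;> tauto
        have ham : ¬ τ a = m := fun hc => hme ((hc ▸ ha : (m:Fin n) = e))
        have hbm : τ b = m := by
          by_cases hb : τ b = m
          · exact hb
          · simp [ham, hb] at h2
        exact ⟨a, b, hab, ha, hbm, rfl⟩
      · have hbe : τ b = e := by
          by_cases hb : τ b = e
          · exact hb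
          · simp [ha, hb] at h1
        have hbm : ¬ τ b = m := fun hc => hme ((hc ▸ hbe : (m:Fin n) = e))
        have ham : τ a = m := by
          by_cases hm2 : τ a = m
          · exact hm2
          · simp [hm2, hbm] at h2
        exact ⟨b, a, hab.symm, hbe, ham, Finset.pair_comm a b⟩
  · rintro ⟨a, b, hab, ha, hb, rfl⟩
    intro l
    rw [pair_filter_card hab, ha, hb]
    by_cases h1 : e = l <;> by_cases h2 : m = l <;>
      simp [h1, h2, eq_comm]


lemma fiber_card_eq (e m : Fin n) {B : Finset (Fin s)}
    (hB : ∃ a b : Fin s, a ≠ b ∧ τ a = e ∧ τ b = m ∧ B = {a, b}) :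
    ((Finset.univ.filter fun p : Fin s × Fin s =>
        p.1 ≠ p.2 ∧ τ p.1 = e ∧ τ p.2 = m).filter
      (fun p => ({p.1, p.2} : Finset (Fin s)) = B)).card = if m = e then 2 else 1 := by
  obtain ⟨a, b, hab, ha, hb, rfl⟩ := hB
  have hmem2 : ∀ p : Fin s × Fin s, ({p.1, p.2} : Finset (Fin s)) = {a, b} →
      (p.1 = a ∧ p.2 = b) ∨ (p.1 = b ∧ p.2 = a) ∨ p.1 = p.2 := by
    intro p hp
    have h1 : p.1 ∈ ({a, b} : Finset (Fin s)) := hp ▸ Finset.mem_insert_self _ _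
    have h2 : p.2 ∈ ({a, b} : Finset (Fin s)) := hp ▸ (by simp)
    simp only [Finset.mem_insert, Finset.mem_singleton] at h1 h2
    rcases h1 with h1 | h1 <;> rcases h2 with h2 | h2
    · right; right; rw [h1, h2]
    · left; exact ⟨h1, h2⟩
    · right; left; exact ⟨h1, h2⟩
    · right; right; rw [h1, h2]
  by_cases hme : m = e
  · subst hme
    have : (Finset.univ.filter fun p : Fin s × Fin s =>
        p.1 ≠ p.2 ∧ τ p.1 = m ∧ τ p.2 = m).filter
        (fun p => ({p.1, p.2} : Finset (Fin s)) = {a, b}) = {(a, b), (b, a)} := by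
      ext p
      simp only [Finset.mem_filter, Finset.mem_univ, true_and, Finset.mem_insert,
        Finset.mem_singleton]
      constructor
      · rintro ⟨⟨hne, -, -⟩, hp⟩
        rcases hmem2 p hp with ⟨h1, h2⟩ | ⟨h1, h2⟩ | h1
        · left; rw [← h1, ← h2]
        · right; rw [← h1, ← h2]
        · exact absurd h1 hne
      · rintro (hp | hp) <;> rw [hp]
        · exact ⟨⟨hab, ha, hb⟩, rfl⟩
        · exact ⟨⟨hab.symm, hb, ha⟩, Finset.pair_comm b a⟩
    rw [this, if_pos rfl]
    rw [Finset.card_insert_of_notMem (by simp [Prod.ext_iff]; intro hc; exact absurd hc hab),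
      Finset.card_singleton]
  · have : (Finset.univ.filter fun p : Fin s × Fin s =>
        p.1 ≠ p.2 ∧ τ p.1 = e ∧ τ p.2 = m).filter
        (fun p => ({p.1, p.2} : Finset (Fin s)) = {a, b}) = {(a, b)} := by
      ext p
      simp only [Finset.mem_filter, Finset.mem_univ, true_and, Finset.mem_singleton]
      constructor
      · rintro ⟨⟨hne, hp1, hp2⟩, hp⟩
        rcases hmem2 p hp with ⟨h1, h2⟩ | ⟨h1, h2⟩ | h1
        · rw [Prod.ext_iff]; exact ⟨h1, h2⟩
        · exact absurd (h1 ▸ hp1 : τ b = e) (fun hc => hme (hb ▸ hc ▸ rfl))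
        · exact absurd h1 hne
      · intro hp
        rw [hp]
        refine ⟨⟨hab, ha, hb⟩, rfl⟩
    rw [this, if_neg hme, Finset.card_singleton]

lemma pairSet_card (e m : Fin n) :
    (Finset.univ.filter fun p : Fin s × Fin s =>
        p.1 ≠ p.2 ∧ τ p.1 = e ∧ τ p.2 = m).card
      = colCount τ e * (colCount τ m - if m = e then 1 else 0) := by
  by_cases hme : m = e
  · subst hme
    have hset : (Finset.univ.filter fun p : Fin s × Fin s =>
        p.1 ≠ p.2 ∧ τ p.1 = m ∧ τ p.2 = m)
        = (Finset.univ.filter fun j => τ j = m).offDiag := by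
      ext p
      simp only [Finset.mem_filter, Finset.mem_univ, true_and, Finset.mem_offDiag]
      tauto
    rw [hset, Finset.offDiag_card, if_pos rfl, colCount]
    rw [Nat.mul_sub, mul_one]
  · have hset : (Finset.univ.filter fun p : Fin s × Fin s =>
        p.1 ≠ p.2 ∧ τ p.1 = e ∧ τ p.2 = m)
        = (Finset.univ.filter fun j => τ j = e) ×ˢ (Finset.univ.filter fun j => τ j = m) := by
      ext p
      simp only [Finset.mem_filter, Finset.mem_univ, true_and, Finset.mem_product]
      constructor
      · tauto
      · rintro ⟨h1, h2⟩
        exact ⟨fun hc => hme (h2 ▸ hc ▸ h1 ▸ rfl), h1, h2⟩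
    rw [hset, Finset.card_product, if_neg hme, Nat.sub_zero, colCount, colCount]


lemma eTildeC_pair (hrk : G.rank = h) (hmd : HasMinDistGE2 G) (e m : Fin n)
    (he : 1 ≤ colCount τ e)
    (hm : if m = e then 2 ≤ colCount τ e else 1 ≤ colCount τ m) :
    (if m = e then 2 else 1) *
        eTildeC G τ (fun l => colCount τ l -
          ((if l = e then 1 else 0) + (if l = m then 1 else 0)))
      + xi2 G τ e m
    = colCount τ e * (colCount τ m - if m = e then 1 else 0) * h := by
  have hc : ∀ l, (if l = e then 1 else 0) + (if l = m then 1 else 0) ≤ colCount τ l := by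
    intro l
    by_cases h1 : l = e <;> by_cases h2 : l = m
    · have hme : m = e := by rw [← h1, ← h2]
      rw [if_pos hme] at hm
      rw [if_pos h1, if_pos h2, h1]
      omega
    · rw [if_pos h1, if_neg h2, h1]; omega
    · have hme : ¬ m = e := fun hc => h1 (h2.trans hc)
      rw [if_neg hme] at hm
      rw [if_neg h1, if_pos h2, h2]; omega
    · simp [h1, h2]
  -- notation
  set pairSet := (Finset.univ.filter fun p : Fin s × Fin s =>
    p.1 ≠ p.2 ∧ τ p.1 = e ∧ τ p.2 = m) with hpairSet
  set Bset := Finset.univ.filter (fun B : Finset (Fin s) =>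
    ∀ l, (B.filter fun j => τ j = l).card
      = (if l = e then 1 else 0) + (if l = m then 1 else 0)) with hBset
  have hmaps : ∀ p ∈ pairSet, ({p.1, p.2} : Finset (Fin s)) ∈ Bset := by
    intro p hp
    rw [hpairSet, Finset.mem_filter] at hp
    exact (mem_Bset_iff τ e m _).2 ⟨p.1, p.2, hp.2.1, hp.2.2.1, hp.2.2.2, rfl⟩
  have hfib := Finset.sum_fiberwise_of_maps_to' hmaps (fun B => colRank G Bᶜ ∅)
  -- inner sums are constant
  have hinner : ∑ B ∈ Bset, ∑ p ∈ pairSet.filter (fun p => ({p.1, p.2} : Finset (Fin s)) = B),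
      colRank G Bᶜ ∅ = ∑ B ∈ Bset, (if m = e then 2 else 1) * colRank G Bᶜ ∅ := by
    apply Finset.sum_congr rfl
    intro B hB
    rw [Finset.sum_const, fiber_card_eq τ e m ((mem_Bset_iff τ e m B).1 hB), smul_eq_mul]
  -- LHS identification with eTildeC
  have hE : eTildeC G τ (fun l => colCount τ l -
      ((if l = e then 1 else 0) + (if l = m then 1 else 0))) = ∑ B ∈ Bset, colRank G Bᶜ ∅ :=
    eTildeC_compl G τ _ hc
  -- pair sum
  have hpair : ∑ p ∈ pairSet, colRank G ({p.1, p.2} : Finset (Fin s))ᶜ ∅ + xi2 G τ e m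
      = pairSet.card * h := by
    have hterm : ∀ p ∈ pairSet, colRank G ({p.1, p.2} : Finset (Fin s))ᶜ ∅
        + (if ∃ x : Fin h → ZMod 2, Matrix.vecMul x G = wt2vec p.1 p.2 then 1 else 0) = h := by
      intro p hp
      rw [hpairSet, Finset.mem_filter] at hp
      exact colRank_compl_pair G hrk hmd hp.2.1
    have hsum := Finset.sum_congr rfl hterm
    rw [Finset.sum_add_distrib, Finset.sum_const, smul_eq_mul] at hsum
    have hxi : ∑ p ∈ pairSet,
        (if ∃ x : Fin h → ZMod 2, Matrix.vecMul x G = wt2vec p.1 p.2 then 1 else 0)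
        = xi2 G τ e m := by
      rw [← Finset.card_filter, xi2, hpairSet, Finset.filter_filter]
      congr 1
      apply Finset.filter_congr
      intro p _
      tauto
    rw [hxi] at hsum
    exact hsum
  rw [hE, Finset.mul_sum, ← hinner, hfib]
  rw [pairSet_card τ e m] at hpair
  exact hpair

end Aux3

section Aux4
open Finset Matrix
variable {n h s : ℕ} (G : Matrix (Fin h) (Fin s) (ZMod 2)) (τ : Fin s → Fin n)

lemma aCN_zero (hrk : G.rank = h) (hmd : HasMinDistGE2 G) (e : Fin n)
    (he : 1 ≤ colCount τ e) : aCN G τ e (fun _ => 0) = 0 := by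
  rw [aCN]
  rw [show (fun l => colCount τ l - (fun _ : Fin n => 0) l) = colCount τ by funext l; simp]
  rw [show (fun l => colCount τ l - (fun _ : Fin n => 0) l - (if l = e then 1 else 0))
      = (fun l => colCount τ l - if l = e then 1 else 0) by funext l; simp]
  rw [eTildeC_full G τ hrk, eTildeC_one G τ hrk hmd e he]
  push_cast [Nat.sub_zero]
  ring

lemma aCN_t1 (hrk : G.rank = h) (hmd : HasMinDistGE2 G) (e m : Fin n)
    (he : 1 ≤ colCount τ e)
    (hm : if m = e then 2 ≤ colCount τ e else 1 ≤ colCount τ m) :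
    aCN G τ e (fun l => if l = m then 1 else 0) = (xi2 G τ e m : ℝ) := by
  have hpair := eTildeC_pair G τ hrk hmd e m he hm
  have harg : (fun l => colCount τ l - (fun l => if l = m then 1 else 0) l
      - (if l = e then 1 else 0))
      = (fun l => colCount τ l - ((if l = e then 1 else 0) + (if l = m then 1 else 0))) := by
    funext l
    simp only []
    omega
  rw [aCN, harg]
  by_cases hme : m = e
  · subst hme
    simp only [eq_self_iff_true, if_true] at hm hpair ⊢
    rw [eTildeC_one G τ hrk hmd m he]
    have hcast := congrArg (fun x : ℕ => (x : ℝ)) hpair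
    push_cast [Nat.cast_sub he] at hcast ⊢
    linear_combination -hcast
  · rw [if_neg hme] at hm
    simp only [if_neg (fun hc : (e : Fin n) = m => hme hc.symm)]
    rw [eTildeC_one G τ hrk hmd m hm]
    have hcast := congrArg (fun x : ℕ => (x : ℝ)) hpair
    push_cast [Nat.sub_zero, if_neg hme] at hcast ⊢
    linear_combination -hcast



lemma hasDerivAt_base (a b : ℕ) :
    HasDerivAt (fun x : ℝ => (1 - x) ^ a * x ^ b)
      (if a = 0 then (b : ℝ) else if a = 1 then -1 else 0) 1 := by
  have h1 : HasDerivAt (fun x : ℝ => 1 - x) (-1) 1 := (hasDerivAt_id 1).const_sub 1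
  have h4 := (h1.fun_pow a).fun_mul (hasDerivAt_pow b (1 : ℝ))
  refine h4.congr_deriv ?_
  rcases a with _ | a
  · norm_num
  · rcases a with _ | a
    · norm_num
    · simp [zero_pow, sub_self]

lemma xi2_zero_of_no_m (e m : Fin n) (hme : m ≠ e) (hqm : colCount τ m = 0) :
    xi2 G τ e m = 0 := by
  rw [xi2, Finset.card_eq_zero, Finset.eq_empty_iff_forall_notMem]
  rintro p hp
  simp only [Finset.mem_filter, Finset.mem_univ, true_and] at hp
  have : p.2 ∈ Finset.univ.filter fun j => τ j = m := by
    simp [hp.2.2.1]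
  rw [Finset.card_eq_zero.1 hqm] at this
  exact absurd this (Finset.notMem_empty _)

lemma xi2_zero_of_single (e : Fin n) (hq : colCount τ e ≤ 1) :
    xi2 G τ e e = 0 := by
  rw [xi2, Finset.card_eq_zero, Finset.eq_empty_iff_forall_notMem]
  rintro p hp
  simp only [Finset.mem_filter, Finset.mem_univ, true_and] at hp
  have hsub : ({p.1, p.2} : Finset (Fin s)) ⊆ Finset.univ.filter fun j => τ j = e := by
    intro r hr
    simp only [Finset.mem_insert, Finset.mem_singleton] at hr
    rcases hr with hr | hr <;> subst hr <;> simp [hp.2.1, hp.2.2.1]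
  have := Finset.card_le_card hsub
  rw [Finset.card_pair hp.1] at this
  rw [colCount] at hq
  omega

lemma hWeight_wt2vec {i j : Fin s} (hij : i ≠ j) : hWeight (wt2vec i j) = 2 := by
  rw [hWeight]
  have : (Finset.univ.filter fun r => wt2vec i j r ≠ 0) = {i, j} := by
    ext r
    simp only [Finset.mem_filter, Finset.mem_univ, true_and, Finset.mem_insert,
      Finset.mem_singleton, wt2vec]
    by_cases hr : r = i ∨ r = j <;> simp [hr] <;> tauto
  rw [this, Finset.card_pair hij]

lemma t1_mem_tRange_iff (e m : Fin n) (he : 1 ≤ colCount τ e) :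
    ((fun l => if l = m then 1 else 0) ∈ tRange (colCount τ) e)
      ↔ (if m = e then 2 ≤ colCount τ e else 1 ≤ colCount τ m) := by
  rw [tRange, Fintype.mem_piFinset]
  simp only [Finset.mem_range]
  constructor
  · intro ht
    have hm2 := ht m
    rw [if_pos rfl] at hm2
    by_cases hme : m = e
    · rw [if_pos hme] at hm2 ⊢
      rw [hme] at hm2
      omega
    · rw [if_neg hme] at hm2 ⊢
      omega
  · intro hcond l
    by_cases hlm : l = m
    · rw [if_pos hlm]
      by_cases hle : l = e
      · rw [if_pos hle]
        have hme : m = e := by rw [← hlm, hle]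
        rw [if_pos hme] at hcond
        rw [hle]
        omega
      · rw [if_neg hle]
        have hme : ¬ m = e := fun hc => hle (hlm.trans hc)
        rw [if_neg hme] at hcond
        rw [hlm]
        omega
    · rw [if_neg hlm]
      by_cases hle : l = e
      · rw [if_pos hle, hle]
        omega
      · rw [if_neg hle]
        omega



lemma deriv_IEC_core (hrk : G.rank = h) (hmd : HasMinDistGE2 G) (e m : Fin n)
    (he : 0 < colCount τ e) :
    deriv (fun x : ℝ => IEC G τ e (Function.update (fun _ => (1 : ℝ)) m x)) 1
      = (xi2 G τ e m : ℝ) / (colCount τ e : ℝ) := by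
  classical
  set Ct : (Fin n → ℕ) → ℝ := fun t => ∏ l ∈ Finset.univ.erase m, (0 : ℝ) ^ (t l) with hCt
  have hfun : (fun x : ℝ => IEC G τ e (Function.update (fun _ => (1 : ℝ)) m x))
      = fun x => 1 - (1 / (colCount τ e : ℝ)) * ∑ t ∈ tRange (colCount τ) e,
        ((1 - x) ^ (t m) * x ^ (colCount τ m - t m - (if m = e then 1 else 0)) * Ct t)
          * aCN G τ e t := by
    funext x
    rw [IEC]
    congr 1
    congr 1
    apply Finset.sum_congr rfl
    intro t _
    congr 1
    rw [← Finset.mul_prod_erase _ _ (Finset.mem_univ m), Function.update_self]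
    congr 1
    apply Finset.prod_congr rfl
    intro l hl
    rw [Function.update_of_ne (Finset.ne_of_mem_erase hl)]
    simp

  have hterm : ∀ t ∈ tRange (colCount τ) e,
      HasDerivAt (fun x : ℝ =>
        ((1 - x) ^ (t m) * x ^ (colCount τ m - t m - (if m = e then 1 else 0)) * Ct t)
          * aCN G τ e t)
        (((if t m = 0 then ((colCount τ m - t m - (if m = e then 1 else 0) : ℕ) : ℝ)
            else if t m = 1 then -1 else 0) * Ct t) * aCN G τ e t) 1 :=
    fun t _ => ((hasDerivAt_base (t m) _).mul_const (Ct t)).mul_const _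
  have hsum := HasDerivAt.fun_sum hterm
  have hf := (hsum.const_mul (1 / (colCount τ e : ℝ))).const_sub 1
  rw [hfun, hf.deriv]
  have hqe : (colCount τ e : ℝ) ≠ 0 := Nat.cast_ne_zero.2 (by omega)
  have hCt1 : Ct (fun l => if l = m then 1 else 0) = 1 :=
    Finset.prod_eq_one fun l hl => by
      simp [Finset.ne_of_mem_erase hl]
  by_cases hcase : if m = e then 2 ≤ colCount τ e else 1 ≤ colCount τ m
  · have hmem := (t1_mem_tRange_iff τ e m (by omega)).2 hcase
    rw [Finset.sum_eq_single_of_mem _ hmem ?hother]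
    case hother =>
      intro t ht htne
      by_cases hz : ∀ l, l ≠ m → t l = 0
      · by_cases hm0 : t m = 0
        · have ht0 : t = fun _ => 0 := funext fun l => by
            by_cases hl : l = m
            · rw [hl]; exact hm0
            · exact hz l hl
          rw [ht0, aCN_zero G τ hrk hmd e (by omega), mul_zero]
        · by_cases hm1 : t m = 1
          · exact absurd (funext fun l => by
              by_cases hl : l = m
              · rw [hl, if_pos rfl]; exact hm1
              · rw [if_neg hl]; exact hz l hl) htne
          · rw [if_neg hm0, if_neg hm1]; ring
      · push_neg at hz
        obtain ⟨l, hlm, hl0⟩ := hz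
        have hz2 : Ct t = 0 :=
          Finset.prod_eq_zero (Finset.mem_erase.2 ⟨hlm, Finset.mem_univ l⟩) (zero_pow hl0)
        rw [hz2]; ring
    rw [aCN_t1 G τ hrk hmd e m (by omega) hcase, hCt1]
    have hD : (if (fun l : Fin n => if l = m then 1 else 0) m = 0 then
        ((colCount τ m - (fun l : Fin n => if l = m then 1 else 0) m
          - if m = e then 1 else 0 : ℕ) : ℝ)
        else if (fun l : Fin n => if l = m then 1 else 0) m = 1 then -1 else 0) = -1 := by
      norm_num
    rw [hD]
    field_simp
  · have hnotmem : (fun l : Fin n => if l = m then 1 else 0) ∉ tRange (colCount τ) e :=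
      fun hc => hcase ((t1_mem_tRange_iff τ e m (by omega)).1 hc)
    rw [Finset.sum_eq_zero ?hzero]
    case hzero =>
      intro t ht
      by_cases hz : ∀ l, l ≠ m → t l = 0
      · by_cases hm0 : t m = 0
        · have ht0 : t = fun _ => 0 := funext fun l => by
            by_cases hl : l = m
            · rw [hl]; exact hm0
            · exact hz l hl
          rw [ht0, aCN_zero G τ hrk hmd e (by omega), mul_zero]
        · by_cases hm1 : t m = 1
          · have ht1 : t = fun l => if l = m then 1 else 0 := funext fun l => by
              by_cases hl : l = m
              · rw [hl, if_pos rfl]; exact hm1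
              · rw [if_neg hl]; exact hz l hl
            exact absurd (ht1 ▸ ht) hnotmem
          · rw [if_neg hm0, if_neg hm1]; ring
      · push_neg at hz
        obtain ⟨l, hlm, hl0⟩ := hz
        have hz2 : Ct t = 0 :=
          Finset.prod_eq_zero (Finset.mem_erase.2 ⟨hlm, Finset.mem_univ l⟩) (zero_pow hl0)
        rw [hz2]; ring
    have hxi : xi2 G τ e m = 0 := by
      by_cases hme : m = e
      · subst hme
        rw [if_pos rfl] at hcase
        exact xi2_zero_of_single G τ m (by omega)
      · rw [if_neg hme] at hcase
        exact xi2_zero_of_no_m G τ e m hme (by omega)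
    rw [hxi]
    simp

end Aux4

/-- **Per-type CN derivative formula.** For a CN type with full-rank generator matrix
whose local code has minimum distance at least `2`, the partial derivative of
`I_{EC,e}^{(δ)}` with respect to its `m`-th argument, evaluated at the all-ones point,
equals `ξ_2^{(δ)}(e,m) / s_{δ,e}`; in particular it is `0` whenever the local code has
minimum distance greater than `2`. -/
theorem deriv_IEC_eq_xi {n h s : ℕ} (hn : 1 ≤ n)
    (G : Matrix (Fin h) (Fin s) (ZMod 2)) (τ : Fin s → Fin n)
    (hrk : G.rank = h) (hmd : HasMinDistGE2 G)
    (e m : Fin n) (he : 0 < colCount τ e) :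
    deriv (fun x : ℝ => IEC G τ e (Function.update (fun _ => (1 : ℝ)) m x)) 1
      = (xi2 G τ e m : ℝ) / (colCount τ e : ℝ) ∧
    ((∀ x : Fin h → ZMod 2, Matrix.vecMul x G ≠ 0 → 3 ≤ hWeight (Matrix.vecMul x G)) →
      deriv (fun x : ℝ => IEC G τ e (Function.update (fun _ => (1 : ℝ)) m x)) 1 = 0) := by
  constructor
  · exact deriv_IEC_core G τ hrk hmd e m he
  · intro h3
    rw [deriv_IEC_core G τ hrk hmd e m he]
    have hxi : xi2 G τ e m = 0 := by
      rw [xi2, Finset.card_eq_zero, Finset.eq_empty_iff_forall_notMem]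
      rintro p hp
      simp only [Finset.mem_filter, Finset.mem_univ, true_and] at hp
      obtain ⟨hne, -, -, x, hx⟩ := hp
      have hnz : Matrix.vecMul x G ≠ 0 := by
        rw [hx]; exact wt2vec_ne_zero
      have := h3 x hnz
      rw [hx, hWeight_wt2vec hne] at this
      omega
    rw [hxi]
    simp
end MET
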